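/- Let S₁,…,S_N be linear subspaces of ℂ^m. Then the following are equivalent: (a) there exists δ > 0 such that for each j and each v ∈ S_j there exists k ≠ j with |⟨v,w⟩| ≤ (1−δ)|v||w| for all w ∈ S_k; (b) the intersection S₁ ∩ ⋯ ∩ S_N = {0}. -/

import Mathlib

open Finset

section aux

variable {E : Type*} [NormedAddCommGroup E] [InnerProductSpace ℂ E]

lemma aux_inner_le (K : Submodule ℂ E) [K.HasOrthogonalProjection] (v : E) {c : ℝ}
    (h : ‖(Submodule.orthogonalProjectionOnto K v : E)‖ ≤ c) :
    ∀ w ∈ K, ‖(inner ℂ v w : ℂ)‖ ≤ c * ‖w‖ := by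
  intro w hw
  have h1 : (inner ℂ v w : ℂ) = inner ℂ ((Submodule.orthogonalProjectionOnto K v : E)) w := by
    have h0 := Submodule.starProjection_inner_eq_zero (K := K) v w hw
    rw [inner_sub_left, sub_eq_zero] at h0
    exact h0
  rw [h1]
  calc ‖(inner ℂ ((Submodule.orthogonalProjectionOnto K v : E)) w : ℂ)‖
      ≤ ‖(Submodule.orthogonalProjectionOnto K v : E)‖ * ‖w‖ := norm_inner_le_norm _ _
    _ ≤ c * ‖w‖ := by
        have : (0:ℝ) ≤ ‖w‖ := norm_nonneg _
        nlinarith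

lemma aux_proj_norm_le (K : Submodule ℂ E) [K.HasOrthogonalProjection] (v : E) :
    ‖(Submodule.orthogonalProjectionOnto K v : E)‖ ≤ ‖v‖ := by
  have h := Submodule.norm_sq_eq_add_norm_sq_projection v K
  rw [← Submodule.norm_coe (Submodule.orthogonalProjectionOnto K v),
    ← Submodule.norm_coe (Submodule.orthogonalProjectionOnto Kᗮ v)] at h
  nlinarith [norm_nonneg (Submodule.orthogonalProjectionOnto K v : E), norm_nonneg v,
    sq_nonneg ‖(Submodule.orthogonalProjectionOnto Kᗮ v : E)‖]

lemma aux_proj_eq_self (K : Submodule ℂ E) [K.HasOrthogonalProjection] (v : E)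
    (h : ‖(Submodule.orthogonalProjectionOnto K v : E)‖ = ‖v‖) : v ∈ K := by
  have hpyth := Submodule.norm_sq_eq_add_norm_sq_projection v K
  have h0 : ‖(Submodule.orthogonalProjectionOnto Kᗮ v : E)‖ = 0 := by
    rw [← Submodule.norm_coe (Submodule.orthogonalProjectionOnto K v),
      ← Submodule.norm_coe (Submodule.orthogonalProjectionOnto Kᗮ v)] at hpyth
    have h2 : ‖(Submodule.orthogonalProjectionOnto Kᗮ v : E)‖ ^ 2 = 0 := by
      rw [h] at hpyth; linarith
    exact pow_eq_zero_iff two_ne_zero |>.mp h2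
  have hsum := K.starProjection_add_starProjection_orthogonal v
  rw [Submodule.starProjection_apply, Submodule.starProjection_apply] at hsum
  rw [norm_eq_zero] at h0
  rw [h0, add_zero] at hsum
  rw [← hsum]
  exact (Submodule.orthogonalProjectionOnto K v).2

end aux

theorem stmt_9 {m N : ℕ} (hN : 2 ≤ N)
    (S : Fin N → Submodule ℂ (EuclideanSpace ℂ (Fin m))) :
    (∃ δ > (0 : ℝ), ∀ j, ∀ v ∈ S j, ∃ k ≠ j, ∀ w ∈ S k,
        ‖(inner ℂ v w : ℂ)‖ ≤ (1 - δ) * ‖v‖ * ‖w‖) ↔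
      (⨅ j, S j) = ⊥ := by
  have hNpos : 0 < N := by omega
  haveI : Nontrivial (Fin N) := Fin.nontrivial_iff_two_le.mpr hN
  set E := EuclideanSpace ℂ (Fin m)
  constructor
  · rintro ⟨δ, hδ, h⟩
    rw [eq_bot_iff]
    intro v hv
    simp only [Submodule.mem_iInf] at hv
    obtain ⟨k, -, hk⟩ := h ⟨0, hNpos⟩ v (hv _)
    have hb := hk v (hv k)
    have hre : ‖v‖ * ‖v‖ ≤ ‖(inner ℂ v v : ℂ)‖ := by
      rw [← inner_self_eq_norm_mul_norm (𝕜 := ℂ) v]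
      exact Complex.re_le_norm _
    have hv0 : ‖v‖ = 0 := by
      by_contra hne
      have hpos : 0 < ‖v‖ := lt_of_le_of_ne (norm_nonneg v) (Ne.symm hne)
      nlinarith [mul_pos hpos hpos]
    simpa [Submodule.mem_bot] using norm_eq_zero.mp hv0
  · intro hbot
    -- per-j quantitative bound
    have key : ∀ j : Fin N, ∃ δj : ℝ, 0 < δj ∧ δj ≤ 1 ∧ ∀ v ∈ S j, ∃ k ≠ j,
        ‖(Submodule.orthogonalProjectionOnto (S k) v : E)‖ ≤ (1 - δj) * ‖v‖ := by
      intro j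
      by_cases hSj : S j = ⊥
      · refine ⟨1, one_pos, le_refl _, ?_⟩
        intro v hv
        obtain ⟨k, hk⟩ := exists_ne j
        refine ⟨k, hk, ?_⟩
        have : v = 0 := by simpa [hSj] using hv
        simp [this]
      · -- S j has a unit vector
        obtain ⟨v₁, hv₁S, hv₁ne⟩ := Submodule.exists_mem_ne_zero_of_ne_bot hSj
        set T : Set E := (S j : Set E) ∩ Metric.sphere 0 1 with hT
        have hTne : T.Nonempty := by
          refine ⟨(‖v₁‖⁻¹ : ℂ) • v₁, Submodule.smul_mem _ _ hv₁S, ?_⟩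
          simp only [Metric.mem_sphere, dist_zero_right, norm_smul]
          have : ‖v₁‖ ≠ 0 := norm_ne_zero_iff.mpr hv₁ne
          simp [norm_inv, this]
        have hTcpt : IsCompact T := by
          have : IsClosed (S j : Set E) := (S j).closed_of_finiteDimensional
          exact (isCompact_sphere (0:E) 1).inter_left this
        set s : Finset (Fin N) := Finset.univ.erase j with hs
        have hsne : s.Nonempty := by
          obtain ⟨k, hk⟩ := exists_ne j
          exact ⟨k, Finset.mem_erase.mpr ⟨hk, Finset.mem_univ _⟩⟩
        set g : E → ℝ := fun v => s.inf' hsne (fun k => ‖(Submodule.orthogonalProjectionOnto (S k) v : E)‖)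
          with hg
        have hgcont : Continuous g := by
          rw [continuous_iff_continuousAt]
          intro x
          refine ContinuousAt.finset_inf'_apply hsne ?_
          intro k _
          exact ((continuous_subtype_val.comp
            (Submodule.orthogonalProjectionOnto (S k)).continuous).norm).continuousAt
        obtain ⟨v₀, hv₀T, hv₀max⟩ := hTcpt.exists_isMaxOn hTne hgcont.continuousOn
        have hv₀S : v₀ ∈ S j := hv₀T.1
        have hv₀norm : ‖v₀‖ = 1 := by simpa using hv₀T.2
        have hglt : g v₀ < 1 := by
          by_contra hge
          push_neg at hge
          have hall : ∀ k, v₀ ∈ S k := by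
            intro k
            by_cases hkj : k = j
            · exact hkj ▸ hv₀S
            · have hks : k ∈ s := Finset.mem_erase.mpr ⟨hkj, Finset.mem_univ _⟩
              have h1 : g v₀ ≤ ‖(Submodule.orthogonalProjectionOnto (S k) v₀ : E)‖ :=
                Finset.inf'_le _ hks
              have h2 : ‖(Submodule.orthogonalProjectionOnto (S k) v₀ : E)‖ ≤ ‖v₀‖ :=
                aux_proj_norm_le _ _
              have : ‖(Submodule.orthogonalProjectionOnto (S k) v₀ : E)‖ = ‖v₀‖ := by
                rw [hv₀norm] at h2 ⊢; linarith
              exact aux_proj_eq_self _ _ this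
          have : v₀ ∈ (⨅ j, S j) := Submodule.mem_iInf _ |>.mpr hall
          rw [hbot, Submodule.mem_bot] at this
          rw [this] at hv₀norm
          simp at hv₀norm
        have hgnonneg : 0 ≤ g v₀ :=
          Finset.le_inf' hsne _ (fun k _ => norm_nonneg _)
        refine ⟨1 - g v₀, by linarith, by linarith, ?_⟩
        intro v hv
        by_cases hv0 : v = 0
        · obtain ⟨k, hk⟩ := exists_ne j
          exact ⟨k, hk, by simp [hv0]⟩
        · have hvn : ‖v‖ ≠ 0 := norm_ne_zero_iff.mpr hv0
          set u : E := (‖v‖⁻¹ : ℂ) • v with hu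
          have huS : u ∈ S j := Submodule.smul_mem _ _ hv
          have hun : ‖u‖ = 1 := by
            rw [hu, norm_smul]
            simp [norm_inv, hvn]
          have huT : u ∈ T := ⟨huS, by simpa using hun⟩
          have hgu : g u ≤ g v₀ := hv₀max huT
          obtain ⟨k, hks, hkeq⟩ := Finset.exists_mem_eq_inf' hsne
            (fun k => ‖(Submodule.orthogonalProjectionOnto (S k) u : E)‖)
          have hkne : k ≠ j := (Finset.mem_erase.mp hks).1
          refine ⟨k, hkne, ?_⟩
          have hku : ‖(Submodule.orthogonalProjectionOnto (S k) u : E)‖ ≤ g v₀ := by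
            rw [hg] at hgu; rw [← hkeq]; exact hgu
          have hsc : v = (‖v‖ : ℂ) • u := by
            rw [hu, smul_smul]
            rw [mul_inv_cancel₀ (by exact_mod_cast hvn)]
            simp
          have : ‖(Submodule.orthogonalProjectionOnto (S k) v : E)‖
              = ‖v‖ * ‖(Submodule.orthogonalProjectionOnto (S k) u : E)‖ := by
            conv_lhs => rw [hsc]
            rw [map_smul]
            rw [Submodule.coe_smul, norm_smul]
            simp
          rw [this]
          have h1 : (0:ℝ) ≤ ‖v‖ := norm_nonneg v
          nlinarith
    choose δf hδf0 hδf1 hδf using key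
    have hune : (Finset.univ : Finset (Fin N)).Nonempty := Finset.univ_nonempty
    set δ : ℝ := Finset.univ.inf' hune δf with hδdef
    have hδpos : 0 < δ := by
      rw [hδdef, Finset.lt_inf'_iff]
      intro j _
      exact hδf0 j
    refine ⟨δ, hδpos, ?_⟩
    intro j v hv
    obtain ⟨k, hk, hb⟩ := hδf j v hv
    refine ⟨k, hk, ?_⟩
    have hδle : δ ≤ δf j := Finset.inf'_le _ (Finset.mem_univ j)
    have hb' : ‖(Submodule.orthogonalProjectionOnto (S k) v : E)‖ ≤ (1 - δ) * ‖v‖ := by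
      have : (0:ℝ) ≤ ‖v‖ := norm_nonneg v
      nlinarith
    intro w hw
    exact aux_inner_le (S k) v hb' w hw
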